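/- (Albert) Let g ≥ 1 and let N = (n_{ij}) be a g×g symmetric matrix over the field ℤ/2ℤ. Let λ = rank(N) and π(N) = ∏_{k=1}^g (1 − n_{kk}) ∈ ℤ/2ℤ. Then there exists A ∈ GL(g, ℤ/2ℤ) such that: if π(N) = 0, then A N ᵗA = (I_λ 0; 0 0); and if π(N) = 1, then A N ᵗA = (H_λ 0; 0 0), where H_λ is the λ×λ matrix whose (i,j) entry is 1 if i + j = λ + 1 and 0 otherwise. -/

import Mathlib

set_option maxHeartbeats 1600000

open Matrix

namespace Albert

abbrev F := ZMod 2

variable {p q s t : Type} [Fintype p] [DecidableEq p] [Fintype q] [DecidableEq q]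
  [Fintype s] [DecidableEq s] [Fintype t] [DecidableEq t]

def Cong (M M' : Matrix p p F) : Prop := ∃ A : Matrix p p F, IsUnit A.det ∧ A * M * Aᵀ = M'

lemma Cong.refl (M : Matrix p p F) : Cong M M := ⟨1, by simp, by simp⟩

lemma cong_of_eq {M M' : Matrix p p F} (h : M = M') : Cong M M' := h ▸ Cong.refl M

lemma Cong.trans {M M' M'' : Matrix p p F} (h : Cong M M') (h' : Cong M' M'') :
    Cong M M'' := by
  obtain ⟨A, hA, hEq⟩ := h
  obtain ⟨B, hB, hEq'⟩ := h'
  refine ⟨B * A, ?_, ?_⟩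
  · rw [det_mul]; exact hB.mul hA
  · rw [transpose_mul, ← hEq', ← hEq]; simp only [Matrix.mul_assoc]

lemma Cong.reindex (e : q ≃ p) {M M' : Matrix p p F} (h : Cong M M') :
    Cong (M.submatrix e e) (M'.submatrix e e) := by
  obtain ⟨A, hA, hEq⟩ := h
  refine ⟨A.submatrix e e, ?_, ?_⟩
  · rwa [det_submatrix_equiv_self]
  · rw [transpose_submatrix, submatrix_mul_equiv, submatrix_mul_equiv, hEq]

lemma Cong.perm (σ : p ≃ p) (M : Matrix p p F) : Cong M (M.submatrix σ σ) := by
  classical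
  set P : Matrix p p F := Matrix.of fun i j => if σ i = j then 1 else 0 with hP
  have hPM : P * M = M.submatrix σ id := by
    ext i j
    simp [hP, Matrix.mul_apply, ite_mul]
  have hMP : (M.submatrix σ id) * Pᵀ = M.submatrix σ σ := by
    ext i j
    simp [hP, Matrix.mul_apply, mul_ite]
  have hPPT : P * Pᵀ = 1 := by
    ext i j
    simp [hP, Matrix.mul_apply, one_apply, ite_and]
  refine ⟨P, ?_, by rw [Matrix.mul_assoc, ← Matrix.mul_assoc, hPM, hMP]⟩
  exact IsUnit.of_mul_eq_one _ (by rw [← det_mul, hPPT, det_one])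

lemma Cong.transport (e : q ≃ p) {M : Matrix p p F} {X : Matrix q q F}
    (h : Cong (M.submatrix e e) X) : Cong M (X.submatrix e.symm e.symm) := by
  have h2 := h.reindex e.symm
  rwa [submatrix_submatrix, Equiv.self_comp_symm, submatrix_id_id] at h2

lemma Cong.blockSnd (B : Matrix s s F) {D D' : Matrix t t F} (h : Cong D D') :
    Cong (fromBlocks B 0 0 D) (fromBlocks B 0 0 D') := by
  obtain ⟨A, hA, hEq⟩ := h
  refine ⟨fromBlocks 1 0 0 A, ?_, ?_⟩
  · rw [det_fromBlocks_zero₂₁, det_one, one_mul]; exact hA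
  · rw [fromBlocks_transpose, transpose_one, transpose_zero, transpose_zero]
    rw [fromBlocks_multiply, fromBlocks_multiply]
    simp [Matrix.mul_assoc, ← hEq]

lemma Cong.blockFst {B B' : Matrix s s F} (D : Matrix t t F) (h : Cong B B') :
    Cong (fromBlocks B 0 0 D) (fromBlocks B' 0 0 D) := by
  obtain ⟨A, hA, hEq⟩ := h
  refine ⟨fromBlocks A 0 0 1, ?_, ?_⟩
  · rw [det_fromBlocks_zero₂₁, det_one, mul_one]; exact hA
  · rw [fromBlocks_transpose, transpose_one, transpose_zero, transpose_zero]
    rw [fromBlocks_multiply, fromBlocks_multiply]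
    simp [Matrix.mul_assoc, ← hEq]

lemma Cong.schur (Bk : Matrix s s F) (C : Matrix s t F) (D : Matrix t t F)
    [Invertible Bk] (hB : Bkᵀ = Bk) :
    ∃ S : Matrix t t F, Cong (fromBlocks Bk C Cᵀ D) (fromBlocks Bk 0 0 S) := by
  have key : Bk * (⅟Bk)ᵀ = 1 := by
    have h1 : (⅟Bk * Bkᵀ)ᵀ = Bk * (⅟Bk)ᵀ := by rw [transpose_mul, transpose_transpose]
    rw [← h1, hB, invOf_mul_self, transpose_one]
  refine ⟨D - Cᵀ * ⅟Bk * C, fromBlocks 1 0 (-(Cᵀ * ⅟Bk)) 1, ?_, ?_⟩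
  · rw [det_fromBlocks_zero₁₂, det_one, one_mul, det_one]; exact isUnit_one
  · have hLT : (fromBlocks (1 : Matrix s s F) 0 (-(Cᵀ * ⅟Bk)) 1)ᵀ
        = fromBlocks 1 (-((⅟Bk)ᵀ * C)) (0 : Matrix t s F) 1 := by
      rw [fromBlocks_transpose, transpose_one, transpose_zero, transpose_neg, transpose_mul,
        transpose_transpose, transpose_one]
    have h1 : (fromBlocks (1 : Matrix s s F) 0 (-(Cᵀ * ⅟Bk)) 1) * fromBlocks Bk C Cᵀ D
        = fromBlocks Bk C 0 (D - Cᵀ * ⅟Bk * C) := by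
      rw [fromBlocks_multiply]
      simp only [Matrix.one_mul, Matrix.zero_mul, Matrix.mul_zero, add_zero, zero_add,
        Matrix.neg_mul, Matrix.mul_assoc, invOf_mul_self, Matrix.mul_one, neg_add_cancel,
        neg_add_eq_sub]
    have h2 : fromBlocks Bk C 0 (D - Cᵀ * ⅟Bk * C) * fromBlocks 1 (-((⅟Bk)ᵀ * C)) (0 : Matrix t s F) 1
        = fromBlocks Bk 0 0 (D - Cᵀ * ⅟Bk * C) := by
      rw [fromBlocks_multiply]
      simp only [Matrix.mul_neg, ← Matrix.mul_assoc, key, Matrix.one_mul, Matrix.mul_one,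
        Matrix.zero_mul, Matrix.mul_zero, add_zero, zero_add, neg_add_cancel, neg_zero]
    rw [hLT, h1, h2]

lemma cong_symm {M M' : Matrix p p F} (h : Cong M M') (hs : Mᵀ = M) : M'ᵀ = M' := by
  obtain ⟨A, -, rfl⟩ := h
  rw [transpose_mul, transpose_mul, transpose_transpose, hs, Matrix.mul_assoc]

lemma cong_rank {M M' : Matrix p p F} (h : Cong M M') : M'.rank = M.rank := by
  obtain ⟨A, hA, rfl⟩ := h
  rw [Matrix.mul_assoc, rank_mul_eq_right_of_isUnit_det A _ hA,
    rank_mul_eq_left_of_isUnit_det Aᵀ M (by rwa [det_transpose])]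

lemma cong_diag_zero {M M' : Matrix p p F} (h : Cong M M') (hs : Mᵀ = M)
    (hd : ∀ i, M i i = 0) : ∀ i, M' i i = 0 := by
  obtain ⟨A, -, rfl⟩ := h
  intro i
  have hexp : (A * M * Aᵀ) i i
      = ∑ x ∈ Finset.univ ×ˢ Finset.univ, A i x.1 * M x.1 x.2 * A i x.2 := by
    rw [Finset.sum_product]
    simp only [Matrix.mul_apply, transpose_apply, Finset.sum_mul]
    rw [Finset.sum_comm]
  rw [hexp]
  apply Finset.sum_involution (g := fun x _ => (x.2, x.1))
  · intro x _
    have hM : M x.2 x.1 = M x.1 x.2 := (congrFun (congrFun hs x.2) x.1).symm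
    dsimp only
    rw [hM]
    have : A i x.2 * M x.1 x.2 * A i x.1 = A i x.1 * M x.1 x.2 * A i x.2 := by ring
    rw [this, CharTwo.add_self_eq_zero]
  · intro x _ hf
    intro hc
    apply hf
    have : x.2 = x.1 := congrArg Prod.fst hc
    rw [this, hd, mul_zero, zero_mul]
  · intro x _; exact Finset.mem_product.mpr ⟨Finset.mem_univ _, Finset.mem_univ _⟩
  · intro x _; rfl


lemma F_cases : ∀ x : F, x ≠ 0 → x = 1 := by decide

lemma F_cases0 : ∀ x : F, x ≠ 1 → x = 0 := by decide

def splitEquiv (a b g : ℕ) (h : a + b = g) : Fin g ≃ (Fin a ⊕ Fin b) where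
  toFun i := if hi : (i : ℕ) < a then Sum.inl ⟨i, hi⟩ else Sum.inr ⟨(i : ℕ) - a, by omega⟩
  invFun x := Sum.elim (fun k : Fin a => (⟨(k : ℕ), by omega⟩ : Fin g))
    (fun k : Fin b => (⟨a + (k : ℕ), by omega⟩ : Fin g)) x
  left_inv i := by
    by_cases hi : (i : ℕ) < a
    · simp [hi]
    · simp only [hi, dif_neg, not_false_iff, Sum.elim_inr]
      ext; simp; omega
  right_inv x := by
    rcases x with k | k
    · simp [k.isLt]
    · have hk : ¬ (a + (k : ℕ) < a) := by omega
      simp only [Sum.elim_inr, hk, dif_neg, not_false_iff]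
      congr 1
      show (if hi : a + (k:ℕ) < a then (Sum.inl ⟨a + (k:ℕ), hi⟩ : Fin a ⊕ Fin b)
        else Sum.inr ⟨a + (k:ℕ) - a, by omega⟩) = Sum.inr k
      rw [dif_neg hk]
      exact congrArg Sum.inr (Fin.ext (Nat.add_sub_cancel_left a k))

lemma splitEquiv_lt {a b g : ℕ} {h : a + b = g} {i : Fin g} (hi : (i:ℕ) < a) :
    splitEquiv a b g h i = Sum.inl ⟨(i:ℕ), hi⟩ := by simp [splitEquiv, hi]

lemma splitEquiv_ge {a b g : ℕ} {h : a + b = g} {i : Fin g} (hi : ¬ (i:ℕ) < a) :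
    splitEquiv a b g h i = Sum.inr ⟨(i:ℕ) - a, by have := i.isLt; omega⟩ := by
  simp [splitEquiv, hi]

def Iform (g m : ℕ) : Matrix (Fin g) (Fin g) F :=
  Matrix.of fun i j => if (i:ℕ) = (j:ℕ) ∧ (i:ℕ) < m then 1 else 0

def T3 : Matrix (Fin 3) (Fin 3) F :=
  Matrix.of fun i j => if ((i:ℕ) = 0 ∧ (j:ℕ) = 0) ∨ ((i:ℕ) + (j:ℕ) = 3) then 1 else 0

lemma lemA_eq1 (h m : ℕ) (h1 : 1 ≤ h) :
    (fromBlocks (1 : Matrix (Fin 1) (Fin 1) F) 0 0 (Iform (h-1) m)).submatrix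
        ⇑(splitEquiv 1 (h-1) h (by omega)) ⇑(splitEquiv 1 (h-1) h (by omega))
      = Iform h (m+1) := by
  ext p q
  rw [submatrix_apply]
  rcases lt_or_ge (p:ℕ) 1 with hp | hp <;> rcases lt_or_ge (q:ℕ) 1 with hq | hq
  · rw [splitEquiv_lt hp, splitEquiv_lt hq, fromBlocks_apply₁₁, one_apply]
    show _ = (if (p:ℕ) = (q:ℕ) ∧ (p:ℕ) < m+1 then (1:F) else 0)
    have : (⟨(p:ℕ), hp⟩ : Fin 1) = ⟨(q:ℕ), hq⟩ := by simp only [Fin.mk.injEq]; omega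
    rw [if_pos this, if_pos ⟨by omega, by omega⟩]
  · rw [splitEquiv_lt hp, splitEquiv_ge (by omega), fromBlocks_apply₁₂]
    show (0:F) = (if (p:ℕ) = (q:ℕ) ∧ (p:ℕ) < m+1 then (1:F) else 0)
    rw [if_neg (by omega)]
  · rw [splitEquiv_ge (by omega), splitEquiv_lt hq, fromBlocks_apply₂₁]
    show (0:F) = (if (p:ℕ) = (q:ℕ) ∧ (p:ℕ) < m+1 then (1:F) else 0)
    rw [if_neg (by omega)]
  · rw [splitEquiv_ge (by omega), splitEquiv_ge (by omega), fromBlocks_apply₂₂]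
    show (if (p:ℕ)-1 = (q:ℕ)-1 ∧ (p:ℕ)-1 < m then (1:F) else 0)
      = (if (p:ℕ) = (q:ℕ) ∧ (p:ℕ) < m+1 then (1:F) else 0)
    split_ifs <;> first | rfl | omega

lemma splitEquiv_mk_lt {a b g : ℕ} {h : a + b = g} (v : ℕ) (hv : v < g) (hva : v < a) :
    splitEquiv a b g h ⟨v, hv⟩ = Sum.inl ⟨v, hva⟩ := splitEquiv_lt hva

lemma splitEquiv_mk_ge {a b g : ℕ} {h : a + b = g} (v : ℕ) (hv : v < g) (hva : ¬ v < a) :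
    splitEquiv a b g h ⟨v, hv⟩ = Sum.inr ⟨v - a, by omega⟩ := splitEquiv_ge hva

def H2 : Matrix (Fin 2) (Fin 2) F := Matrix.of fun i j => if (i:ℕ) + (j:ℕ) = 1 then 1 else 0

lemma lemA_eq3 (h m : ℕ) (h2 : 2 ≤ h) :
    (fromBlocks (1 : Matrix (Fin 2) (Fin 2) F) 0 0 (Iform (h-2) m)).submatrix
        ⇑(splitEquiv 2 (h-2) h (by omega)) ⇑(splitEquiv 2 (h-2) h (by omega))
      = Iform h (m+2) := by
  ext p q
  rw [submatrix_apply]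
  rcases lt_or_ge (p:ℕ) 2 with hp | hp <;> rcases lt_or_ge (q:ℕ) 2 with hq | hq
  · rw [splitEquiv_lt hp, splitEquiv_lt hq, fromBlocks_apply₁₁, one_apply]
    show _ = (if (p:ℕ) = (q:ℕ) ∧ (p:ℕ) < m+2 then (1:F) else 0)
    by_cases hpq : (p:ℕ) = (q:ℕ)
    · rw [if_pos (by simp only [Fin.mk.injEq]; omega), if_pos ⟨hpq, by omega⟩]
    · rw [if_neg (by simp only [Fin.mk.injEq]; omega), if_neg (by omega)]
  · rw [splitEquiv_lt hp, splitEquiv_ge (by omega), fromBlocks_apply₁₂]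
    show (0:F) = (if (p:ℕ) = (q:ℕ) ∧ (p:ℕ) < m+2 then (1:F) else 0)
    rw [if_neg (by omega)]
  · rw [splitEquiv_ge (by omega), splitEquiv_lt hq, fromBlocks_apply₂₁]
    show (0:F) = (if (p:ℕ) = (q:ℕ) ∧ (p:ℕ) < m+2 then (1:F) else 0)
    rw [if_neg (by omega)]
  · rw [splitEquiv_ge (by omega), splitEquiv_ge (by omega), fromBlocks_apply₂₂]
    show (if (p:ℕ)-2 = (q:ℕ)-2 ∧ (p:ℕ)-2 < m then (1:F) else 0)
      = (if (p:ℕ) = (q:ℕ) ∧ (p:ℕ) < m+2 then (1:F) else 0)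
    split_ifs <;> first | rfl | omega

lemma lemA_hW3 (h : ℕ) (h3 : 3 ≤ h) (X : Matrix (Fin (h-1-2)) (Fin (h-1-2)) F) :
    (fromBlocks (1 : Matrix (Fin 1) (Fin 1) F) 0 0
        ((fromBlocks H2 0 0 X).submatrix ⇑(splitEquiv 2 (h-1-2) (h-1) (by omega))
          ⇑(splitEquiv 2 (h-1-2) (h-1) (by omega)))).submatrix
        ⇑(splitEquiv 1 (h-1) h (by omega)) ⇑(splitEquiv 1 (h-1) h (by omega))
      = (fromBlocks T3 0 0 X).submatrix ⇑(splitEquiv 3 (h-1-2) h (by omega))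
          ⇑(splitEquiv 3 (h-1-2) h (by omega)) := by
  ext p q
  rw [submatrix_apply, submatrix_apply]
  rcases lt_or_ge (p:ℕ) 1 with hp1 | hp1
  · rw [splitEquiv_lt hp1, splitEquiv_lt (show (p:ℕ) < 3 by omega)]
    rcases lt_or_ge (q:ℕ) 1 with hq1 | hq1
    · rw [splitEquiv_lt hq1, splitEquiv_lt (show (q:ℕ) < 3 by omega),
        fromBlocks_apply₁₁, fromBlocks_apply₁₁, one_apply, if_pos (by simp only [Fin.mk.injEq]; omega)]
      show (1:F) = _
      rw [show T3 ⟨(p:ℕ), by omega⟩ ⟨(q:ℕ), by omega⟩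
          = (if ((p:ℕ) = 0 ∧ (q:ℕ) = 0) ∨ ((p:ℕ) + (q:ℕ) = 3) then (1:F) else 0) from rfl,
        if_pos (Or.inl ⟨by omega, by omega⟩)]
    · rcases lt_or_ge (q:ℕ) 3 with hq3 | hq3
      · rw [splitEquiv_ge (show ¬ (q:ℕ) < 1 by omega), splitEquiv_lt hq3,
          fromBlocks_apply₁₂, fromBlocks_apply₁₁]
        show (0:F) = _
        rw [show T3 ⟨(p:ℕ), by omega⟩ ⟨(q:ℕ), hq3⟩
            = (if ((p:ℕ) = 0 ∧ (q:ℕ) = 0) ∨ ((p:ℕ) + (q:ℕ) = 3) then (1:F) else 0) from rfl,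
          if_neg (by omega)]
      · rw [splitEquiv_ge (show ¬ (q:ℕ) < 1 by omega), splitEquiv_ge (show ¬ (q:ℕ) < 3 by omega),
          fromBlocks_apply₁₂, fromBlocks_apply₁₂]
        rfl
  · rcases lt_or_ge (p:ℕ) 3 with hp3 | hp3
    · rw [splitEquiv_ge (show ¬ (p:ℕ) < 1 by omega), splitEquiv_lt hp3]
      rcases lt_or_ge (q:ℕ) 1 with hq1 | hq1
      · rw [splitEquiv_lt hq1, splitEquiv_lt (show (q:ℕ) < 3 by omega),
          fromBlocks_apply₂₁, fromBlocks_apply₁₁]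
        show (0:F) = _
        rw [show T3 ⟨(p:ℕ), hp3⟩ ⟨(q:ℕ), by omega⟩
            = (if ((p:ℕ) = 0 ∧ (q:ℕ) = 0) ∨ ((p:ℕ) + (q:ℕ) = 3) then (1:F) else 0) from rfl,
          if_neg (by omega)]
      · rcases lt_or_ge (q:ℕ) 3 with hq3 | hq3
        · rw [splitEquiv_ge (show ¬ (q:ℕ) < 1 by omega), splitEquiv_lt hq3,
            fromBlocks_apply₂₂, fromBlocks_apply₁₁, submatrix_apply,
            splitEquiv_mk_lt _ _ (show (p:ℕ)-1 < 2 by omega),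
            splitEquiv_mk_lt _ _ (show (q:ℕ)-1 < 2 by omega), fromBlocks_apply₁₁]
          show (if (p:ℕ)-1 + ((q:ℕ)-1) = 1 then (1:F) else 0) = _
          rw [show T3 ⟨(p:ℕ), hp3⟩ ⟨(q:ℕ), hq3⟩
              = (if ((p:ℕ) = 0 ∧ (q:ℕ) = 0) ∨ ((p:ℕ) + (q:ℕ) = 3) then (1:F) else 0) from rfl]
          split_ifs <;> first | rfl | omega
        · rw [splitEquiv_ge (show ¬ (q:ℕ) < 1 by omega), splitEquiv_ge (show ¬ (q:ℕ) < 3 by omega),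
            fromBlocks_apply₂₂, fromBlocks_apply₁₂, submatrix_apply,
            splitEquiv_mk_lt _ _ (show (p:ℕ)-1 < 2 by omega),
            splitEquiv_mk_ge _ _ (show ¬ (q:ℕ)-1 < 2 by omega), fromBlocks_apply₁₂]
          rfl
    · rw [splitEquiv_ge (show ¬ (p:ℕ) < 1 by omega), splitEquiv_ge (show ¬ (p:ℕ) < 3 by omega)]
      rcases lt_or_ge (q:ℕ) 1 with hq1 | hq1
      · rw [splitEquiv_lt hq1, splitEquiv_lt (show (q:ℕ) < 3 by omega),
          fromBlocks_apply₂₁, fromBlocks_apply₂₁]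
        rfl
      · rcases lt_or_ge (q:ℕ) 3 with hq3 | hq3
        · rw [splitEquiv_ge (show ¬ (q:ℕ) < 1 by omega), splitEquiv_lt hq3,
            fromBlocks_apply₂₂, fromBlocks_apply₂₁, submatrix_apply,
            splitEquiv_mk_ge _ _ (show ¬ (p:ℕ)-1 < 2 by omega),
            splitEquiv_mk_lt _ _ (show (q:ℕ)-1 < 2 by omega), fromBlocks_apply₂₁]
          rfl
        · rw [splitEquiv_ge (show ¬ (q:ℕ) < 1 by omega), splitEquiv_ge (show ¬ (q:ℕ) < 3 by omega),
            fromBlocks_apply₂₂, fromBlocks_apply₂₂, submatrix_apply,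
            splitEquiv_mk_ge _ _ (show ¬ (p:ℕ)-1 < 2 by omega),
            splitEquiv_mk_ge _ _ (show ¬ (q:ℕ)-1 < 2 by omega), fromBlocks_apply₂₂]
          exact congrArg₂ X (by simp only [Fin.mk.injEq]; omega)
            (by simp only [Fin.mk.injEq]; omega)

lemma lemA_eq2 (h : ℕ) (h3 : 3 ≤ h) (X : Matrix (Fin (h-1-2)) (Fin (h-1-2)) F) :
    (fromBlocks (1 : Matrix (Fin 3) (Fin 3) F) 0 0 X).submatrix
        ⇑(splitEquiv 3 (h-1-2) h (by omega)) ⇑(splitEquiv 3 (h-1-2) h (by omega))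
      = (fromBlocks (1 : Matrix (Fin 2) (Fin 2) F) 0 0
          ((fromBlocks (1 : Matrix (Fin 1) (Fin 1) F) 0 0 X).submatrix
            ⇑(splitEquiv 1 (h-1-2) (h-2) (by omega)) ⇑(splitEquiv 1 (h-1-2) (h-2) (by omega)))).submatrix
        ⇑(splitEquiv 2 (h-2) h (by omega)) ⇑(splitEquiv 2 (h-2) h (by omega)) := by
  ext p q
  rw [submatrix_apply, submatrix_apply]
  rcases lt_or_ge (p:ℕ) 2 with hp2 | hp2
  · rw [splitEquiv_lt (show (p:ℕ) < 3 by omega), splitEquiv_lt hp2]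
    rcases lt_or_ge (q:ℕ) 2 with hq2 | hq2
    · rw [splitEquiv_lt (show (q:ℕ) < 3 by omega), splitEquiv_lt hq2,
        fromBlocks_apply₁₁, fromBlocks_apply₁₁, one_apply, one_apply]
      by_cases hpq : (p:ℕ) = (q:ℕ)
      · rw [if_pos (by simp only [Fin.mk.injEq]; omega), if_pos (by simp only [Fin.mk.injEq]; omega)]
      · rw [if_neg (by simp only [Fin.mk.injEq]; omega), if_neg (by simp only [Fin.mk.injEq]; omega)]
    · rcases lt_or_ge (q:ℕ) 3 with hq3 | hq3
      · rw [splitEquiv_lt hq3, splitEquiv_ge (show ¬ (q:ℕ) < 2 by omega),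
          fromBlocks_apply₁₁, fromBlocks_apply₁₂, one_apply,
          if_neg (by simp only [Fin.mk.injEq]; omega)]
        rfl
      · rw [splitEquiv_ge (show ¬ (q:ℕ) < 3 by omega), splitEquiv_ge (show ¬ (q:ℕ) < 2 by omega),
          fromBlocks_apply₁₂, fromBlocks_apply₁₂]
        rfl
  · rcases lt_or_ge (p:ℕ) 3 with hp3 | hp3
    · rw [splitEquiv_lt hp3, splitEquiv_ge (show ¬ (p:ℕ) < 2 by omega)]
      rcases lt_or_ge (q:ℕ) 2 with hq2 | hq2
      · rw [splitEquiv_lt (show (q:ℕ) < 3 by omega), splitEquiv_lt hq2,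
          fromBlocks_apply₁₁, fromBlocks_apply₂₁, one_apply,
          if_neg (by simp only [Fin.mk.injEq]; omega)]
        rfl
      · rcases lt_or_ge (q:ℕ) 3 with hq3 | hq3
        · rw [splitEquiv_lt hq3, splitEquiv_ge (show ¬ (q:ℕ) < 2 by omega),
            fromBlocks_apply₁₁, fromBlocks_apply₂₂, submatrix_apply,
            splitEquiv_mk_lt _ _ (show (p:ℕ)-2 < 1 by omega),
            splitEquiv_mk_lt _ _ (show (q:ℕ)-2 < 1 by omega), fromBlocks_apply₁₁,
            one_apply, one_apply, if_pos (by simp only [Fin.mk.injEq]; omega), if_pos (by simp only [Fin.mk.injEq]; omega)]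
        · rw [splitEquiv_ge (show ¬ (q:ℕ) < 3 by omega), splitEquiv_ge (show ¬ (q:ℕ) < 2 by omega),
            fromBlocks_apply₁₂, fromBlocks_apply₂₂, submatrix_apply,
            splitEquiv_mk_lt _ _ (show (p:ℕ)-2 < 1 by omega),
            splitEquiv_mk_ge _ _ (show ¬ (q:ℕ)-2 < 1 by omega), fromBlocks_apply₁₂]
          rfl
    · rw [splitEquiv_ge (show ¬ (p:ℕ) < 3 by omega), splitEquiv_ge (show ¬ (p:ℕ) < 2 by omega)]
      rcases lt_or_ge (q:ℕ) 2 with hq2 | hq2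
      · rw [splitEquiv_lt (show (q:ℕ) < 3 by omega), splitEquiv_lt hq2,
          fromBlocks_apply₂₁, fromBlocks_apply₂₁]
        rfl
      · rcases lt_or_ge (q:ℕ) 3 with hq3 | hq3
        · rw [splitEquiv_lt hq3, splitEquiv_ge (show ¬ (q:ℕ) < 2 by omega),
            fromBlocks_apply₂₁, fromBlocks_apply₂₂, submatrix_apply,
            splitEquiv_mk_ge _ _ (show ¬ (p:ℕ)-2 < 1 by omega),
            splitEquiv_mk_lt _ _ (show (q:ℕ)-2 < 1 by omega), fromBlocks_apply₂₁]
          rfl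
        · rw [splitEquiv_ge (show ¬ (q:ℕ) < 3 by omega), splitEquiv_ge (show ¬ (q:ℕ) < 2 by omega),
            fromBlocks_apply₂₂, fromBlocks_apply₂₂, submatrix_apply,
            splitEquiv_mk_ge _ _ (show ¬ (p:ℕ)-2 < 1 by omega),
            splitEquiv_mk_ge _ _ (show ¬ (q:ℕ)-2 < 1 by omega), fromBlocks_apply₂₂]
          exact congrArg₂ X (by simp only [Fin.mk.injEq]; omega)
            (by simp only [Fin.mk.injEq]; omega)

def cycFun (g m : ℕ) (hm : m + 1 < g) (p : Fin g) : Fin g :=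
  ⟨if (p:ℕ) = 0 then 0 else if (p:ℕ) = 1 then m+1 else if (p:ℕ) ≤ m+1 then (p:ℕ)-1 else (p:ℕ),
    by have := p.isLt; split_ifs <;> omega⟩

def cycInv (g m : ℕ) (hm : m + 1 < g) (q : Fin g) : Fin g :=
  ⟨if (q:ℕ) = 0 then 0 else if (q:ℕ) = m+1 then 1 else if (q:ℕ) ≤ m then (q:ℕ)+1 else (q:ℕ),
    by have := q.isLt; split_ifs <;> omega⟩

def cycleEquiv (g m : ℕ) (hm : m + 1 < g) : Fin g ≃ Fin g where
  toFun := cycFun g m hm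
  invFun := cycInv g m hm
  left_inv p := by
    have hp := p.isLt
    ext
    simp only [cycFun, cycInv, Fin.val_mk]
    split_ifs <;> first | omega | (exfalso; exact ‹False›)
  right_inv q := by
    have hq := q.isLt
    ext
    simp only [cycFun, cycInv, Fin.val_mk]
    split_ifs <;> first | omega | (exfalso; exact ‹False›)

lemma cycleEquiv_val (g m : ℕ) (hm : m + 1 < g) (p : Fin g) :
    ((cycleEquiv g m hm p : Fin g) : ℕ)
      = if (p:ℕ) = 0 then 0 else if (p:ℕ) = 1 then m+1
        else if (p:ℕ) ≤ m+1 then (p:ℕ)-1 else (p:ℕ) := rfl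

lemma extract_general {r b h : ℕ} (hr : r + b = h) (M : Matrix (Fin h) (Fin h) F)
    (hsym : Mᵀ = M) (Bk : Matrix (Fin r) (Fin r) F) [Invertible Bk] (hBk : Bkᵀ = Bk)
    (hblock : ∀ (x y : Fin r),
      M ⟨(x : ℕ), by have := x.isLt; omega⟩ ⟨(y : ℕ), by have := y.isLt; omega⟩ = Bk x y) :
    ∃ S : Matrix (Fin b) (Fin b) F, Sᵀ = S ∧
      Cong M ((fromBlocks Bk 0 0 S).submatrix (splitEquiv r b h hr) (splitEquiv r b h hr)) := by
  set e := splitEquiv r b h hr with he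
  set M' := M.submatrix ⇑e.symm ⇑e.symm with hM'
  have hsym' : M'ᵀ = M' := by
    rw [hM', transpose_submatrix, hsym]
  have hB : M'.toBlocks₁₁ = Bk := by
    ext x y
    show M' (Sum.inl x) (Sum.inl y) = Bk x y
    rw [hM']
    show M (e.symm (Sum.inl x)) (e.symm (Sum.inl y)) = Bk x y
    have hx : e.symm (Sum.inl x) = ⟨(x : ℕ), by have := x.isLt; omega⟩ := rfl
    have hy : e.symm (Sum.inl y) = ⟨(y : ℕ), by have := y.isLt; omega⟩ := rfl
    rw [hx, hy]
    exact hblock x y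
  have h21 : M'.toBlocks₂₁ = (M'.toBlocks₁₂)ᵀ := by
    ext k i
    show M' (Sum.inr k) (Sum.inl i) = M' (Sum.inl i) (Sum.inr k)
    have hh := congrFun (congrFun hsym' (Sum.inl i)) (Sum.inr k)
    rw [transpose_apply] at hh
    exact hh
  have hfb : M' = fromBlocks Bk (M'.toBlocks₁₂) (M'.toBlocks₁₂)ᵀ (M'.toBlocks₂₂) := by
    conv_lhs => rw [← fromBlocks_toBlocks M']
    rw [hB, h21]
  obtain ⟨S, hCong'⟩ := Cong.schur Bk M'.toBlocks₁₂ M'.toBlocks₂₂ hBk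
  rw [← hfb] at hCong'
  have hC := Cong.transport e.symm (by rwa [← hM'])
  rw [Equiv.symm_symm] at hC
  refine ⟨S, ?_, hC⟩
  have hFs : (fromBlocks Bk 0 0 S)ᵀ = fromBlocks Bk 0 0 S := cong_symm hCong' hsym'
  have hSt : Sᵀ = ((fromBlocks Bk 0 0 S)ᵀ).toBlocks₂₂ := by
    rw [fromBlocks_transpose, toBlocks_fromBlocks₂₂]
  rw [hSt, hFs, toBlocks_fromBlocks₂₂]


lemma extract_one {h : ℕ} (h1 : 0 < h) (M : Matrix (Fin h) (Fin h) F) (hsym : Mᵀ = M)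
    (hM : M ⟨0, h1⟩ ⟨0, h1⟩ = 1) :
    ∃ S : Matrix (Fin (h-1)) (Fin (h-1)) F, Sᵀ = S ∧
      Cong M ((fromBlocks (1 : Matrix (Fin 1) (Fin 1) F) 0 0 S).submatrix
        (splitEquiv 1 (h-1) h (by omega)) (splitEquiv 1 (h-1) h (by omega))) := by
  haveI : Invertible (1 : Matrix (Fin 1) (Fin 1) F) := invertibleOne
  refine extract_general (by omega : 1 + (h-1) = h) M hsym 1 transpose_one ?_
  intro x y
  have hxy : x = y := Fin.ext (by omega)
  subst hxy
  rw [one_apply_eq]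
  convert hM using 2 <;> (simp only [Fin.mk.injEq]; omega)

instance : Invertible H2 := ⟨H2, by decide, by decide⟩

lemma extract_hyp {h : ℕ} (h2 : 2 ≤ h) (M : Matrix (Fin h) (Fin h) F) (hsym : Mᵀ = M)
    {i j : Fin h} (hij : i ≠ j) (hMij : M i j = 1) (hMii : M i i = 0) (hMjj : M j j = 0) :
    ∃ S : Matrix (Fin (h-2)) (Fin (h-2)) F, Sᵀ = S ∧
      Cong M ((fromBlocks H2 0 0 S).submatrix (splitEquiv 2 (h-2) h (by omega))
        (splitEquiv 2 (h-2) h (by omega))) := by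
  set z0 : Fin h := ⟨0, by omega⟩ with hz0
  set z1 : Fin h := ⟨1, by omega⟩ with hz1
  have hz01 : z0 ≠ z1 := by simp [hz0, hz1, Fin.ext_iff]
  set c1 := Equiv.swap z0 i with hc1
  set j' := c1 j with hj'
  have hj'ne : j' ≠ z0 := by
    intro hcon
    apply hij
    have hj2 : j = c1 z0 := by
      have := congrArg c1 hcon
      rwa [hj', hc1, Equiv.swap_apply_self, ← hc1] at this
    rw [hc1, Equiv.swap_apply_left] at hj2
    exact hj2.symm
  set σ := (Equiv.swap z1 j').trans c1 with hσ
  have hσ0 : σ z0 = i := by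
    have h1 : Equiv.swap z1 j' z0 = z0 := Equiv.swap_apply_of_ne_of_ne hz01 (Ne.symm hj'ne)
    rw [hσ, Equiv.trans_apply, h1, hc1, Equiv.swap_apply_left]
  have hσ1 : σ z1 = j := by
    rw [hσ, Equiv.trans_apply, Equiv.swap_apply_left, hj', hc1, Equiv.swap_apply_self]
  have hMji : M j i = 1 := by
    have hh := congrFun (congrFun hsym i) j
    rw [transpose_apply] at hh
    rw [hh, hMij]
  set M1 := M.submatrix ⇑σ ⇑σ with hM1
  have hsym1 : M1ᵀ = M1 := by rw [hM1, transpose_submatrix, hsym]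
  have hblock : ∀ (x y : Fin 2),
      M1 ⟨(x : ℕ), by have := x.isLt; omega⟩ ⟨(y : ℕ), by have := y.isLt; omega⟩ = H2 x y := by
    intro x y
    rcases x with ⟨xv, hxv⟩; rcases y with ⟨yv, hyv⟩
    have hzz0 : (⟨(0:ℕ), by omega⟩ : Fin h) = z0 := rfl
    have hzz1 : (⟨(1:ℕ), by omega⟩ : Fin h) = z1 := rfl
    interval_cases xv <;> interval_cases yv <;>
      simp only [hM1, submatrix_apply, hzz0, hzz1, hσ0, hσ1, hMij, hMji, hMii, hMjj] <;>
      simp [H2]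
  have hH2T : H2ᵀ = H2 := by decide
  obtain ⟨S, hSsym, hCS⟩ := extract_general (by omega : 2 + (h - 2) = h) M1 hsym1 H2 hH2T hblock
  exact ⟨S, hSsym, (Cong.perm σ M).trans hCS⟩


def A3 : Matrix (Fin 3) (Fin 3) F := !![1,1,0;1,0,1;1,1,1]

def A3i : Matrix (Fin 3) (Fin 3) F := !![1,1,1;0,1,1;1,0,1]

lemma cong_T3 : Cong T3 (1 : Matrix (Fin 3) (Fin 3) F) := by
  refine ⟨A3, ?_, by decide⟩
  have h1 : A3 * A3i = 1 := by decide
  exact IsUnit.of_mul_eq_one _ (by rw [← det_mul, h1, det_one])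

def Hform (g m : ℕ) : Matrix (Fin g) (Fin g) F :=
  Matrix.of fun i j => if (i:ℕ) + (j:ℕ) + 1 = m then 1 else 0

lemma lemB_eq (h m : ℕ) (h2 : 2 ≤ h) (hm : m ≤ h - 2) :
    (fromBlocks H2 0 0 (Hform (h-2) m)).submatrix
        ⇑(splitEquiv 2 (h-2) h (by omega)) ⇑(splitEquiv 2 (h-2) h (by omega))
      = (Hform h (m+2)).submatrix ⇑(cycleEquiv h m (by omega)) ⇑(cycleEquiv h m (by omega)) := by
  ext p q
  rw [submatrix_apply, submatrix_apply]
  have hRv : (Hform h (m+2)) (cycleEquiv h m (by omega) p) (cycleEquiv h m (by omega) q)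
      = if ((cycleEquiv h m (by omega) p : Fin h) : ℕ)
          + ((cycleEquiv h m (by omega) q : Fin h) : ℕ) + 1 = m + 2 then 1 else 0 := rfl
  rw [hRv, cycleEquiv_val, cycleEquiv_val]
  rcases lt_or_ge (p:ℕ) 2 with hp | hp <;> rcases lt_or_ge (q:ℕ) 2 with hq | hq
  · rw [splitEquiv_lt hp, splitEquiv_lt hq, fromBlocks_apply₁₁]
    show (if (p:ℕ) + (q:ℕ) = 1 then (1:F) else 0) = _
    split_ifs <;> first | rfl | omega
  · rw [splitEquiv_lt hp, splitEquiv_ge (by omega), fromBlocks_apply₁₂]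
    show (0:F) = _
    split_ifs <;> first | rfl | omega
  · rw [splitEquiv_ge (by omega), splitEquiv_lt hq, fromBlocks_apply₂₁]
    show (0:F) = _
    split_ifs <;> first | rfl | omega
  · rw [splitEquiv_ge (by omega), splitEquiv_ge (by omega), fromBlocks_apply₂₂]
    show (if (p:ℕ) - 2 + ((q:ℕ) - 2) + 1 = m then (1:F) else 0) = _
    split_ifs <;> first | rfl | omega

lemma lemB : ∀ h : ℕ, ∀ M : Matrix (Fin h) (Fin h) F, Mᵀ = M → (∀ i, M i i = 0) →
    ∃ m, m ≤ h ∧ Cong M (Hform h m) := by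
  intro h
  induction h using Nat.strong_induction_on with
  | _ h IH =>
    intro M hsym hd
    by_cases hM0 : M = 0
    · refine ⟨0, by omega, cong_of_eq ?_⟩
      rw [hM0]; ext i j; simp [Hform]
    · have hne : ∃ i j, M i j ≠ 0 := by
        by_contra hc
        push_neg at hc
        exact hM0 (by ext i j; simpa using hc i j)
      obtain ⟨i, j, hne⟩ := hne
      have hij1 : M i j = 1 := F_cases _ hne
      have hij : i ≠ j := by
        intro hc; rw [hc, hd j] at hne; exact hne rfl
      have h2 : 2 ≤ h := by
        rcases i with ⟨iv, hiv⟩; rcases j with ⟨jv, hjv⟩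
        have : iv ≠ jv := fun hc => hij (by simp [hc])
        omega
      obtain ⟨S, hSsym, hCS⟩ := extract_hyp h2 M hsym hij hij1 (hd i) (hd j)
      set es := splitEquiv 2 (h-2) h (by omega) with hes
      have hSd : ∀ k, S k k = 0 := by
        intro k
        have hall := cong_diag_zero hCS hsym hd (es.symm (Sum.inr k))
        rwa [submatrix_apply, Equiv.apply_symm_apply, fromBlocks_apply₂₂] at hall
      obtain ⟨m, hm, hCSm⟩ := IH (h-2) (by omega) S hSsym hSd
      have hchain : Cong M ((fromBlocks H2 0 0 (Hform (h-2) m)).submatrix es es) :=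
        hCS.trans (Cong.reindex es (Cong.blockSnd H2 hCSm))
      set τ := cycleEquiv h m (by omega) with hτ
      have hchain2 : Cong M ((Hform h (m+2)).submatrix ⇑τ ⇑τ) := by
        rw [hτ, ← lemB_eq h m h2 hm]
        exact hchain
      have hperm : Cong ((Hform h (m+2)).submatrix ⇑τ ⇑τ) (Hform h (m+2)) := by
        have hp := Cong.perm τ.symm ((Hform h (m+2)).submatrix ⇑τ ⇑τ)
        rwa [submatrix_submatrix, Equiv.self_comp_symm, submatrix_id_id] at hp
      exact ⟨m + 2, by omega, hchain2.trans hperm⟩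


lemma lemA : ∀ h : ℕ, ∀ M : Matrix (Fin h) (Fin h) F, Mᵀ = M → (∃ k, M k k = 1) →
    ∃ m, m ≤ h ∧ Cong M (Iform h m) := by
  intro h
  induction h using Nat.strong_induction_on with
  | _ h IH =>
    intro M hsym hdiag
    obtain ⟨k, hk⟩ := hdiag
    have h1 : 0 < h := k.pos
    set z0 : Fin h := ⟨0, h1⟩ with hz0
    set σ := Equiv.swap k z0 with hσ
    set M1 := M.submatrix ⇑σ ⇑σ with hM1
    have hsym1 : M1ᵀ = M1 := by rw [hM1, transpose_submatrix, hsym]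
    have hM100 : M1 z0 z0 = 1 := by
      rw [hM1, submatrix_apply, hσ, Equiv.swap_apply_right, hk]
    obtain ⟨S, hSsym, hCS⟩ := extract_one h1 M1 hsym1 hM100
    have hCMS : Cong M ((fromBlocks (1 : Matrix (Fin 1) (Fin 1) F) 0 0 S).submatrix
        ⇑(splitEquiv 1 (h-1) h (by omega)) ⇑(splitEquiv 1 (h-1) h (by omega))) :=
      (Cong.perm σ M).trans hCS
    have key : ∀ Z : Matrix (Fin (h-1)) (Fin (h-1)) F, Cong S Z →
        Cong M ((fromBlocks (1 : Matrix (Fin 1) (Fin 1) F) 0 0 Z).submatrix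
          ⇑(splitEquiv 1 (h-1) h (by omega)) ⇑(splitEquiv 1 (h-1) h (by omega))) :=
      fun Z hZ => hCMS.trans (Cong.reindex _ (Cong.blockSnd _ hZ))
    by_cases hSd : ∃ k', S k' k' = 1
    · obtain ⟨m, hm, hCSm⟩ := IH (h-1) (by omega) S hSsym hSd
      refine ⟨m+1, by omega, ?_⟩
      have hthis := key _ hCSm
      rwa [lemA_eq1 h m h1] at hthis
    · have hSd0 : ∀ k', S k' k' = 0 := by
        intro k'
        by_contra hc
        exact hc (F_cases0 _ (fun hc1 => hSd ⟨k', hc1⟩))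
      by_cases hS0 : S = 0
      · refine ⟨1, by omega, ?_⟩
        have hz : Cong S (Iform (h-1) 0) := cong_of_eq (by rw [hS0]; ext i j; simp [Iform])
        have hthis := key _ hz
        rwa [lemA_eq1 h 0 h1] at hthis
      · have hne : ∃ i j, S i j ≠ 0 := by
          by_contra hc
          push_neg at hc
          exact hS0 (by ext i j; simpa using hc i j)
        obtain ⟨i', j', hne'⟩ := hne
        have hij1' : S i' j' = 1 := F_cases _ hne'
        have hij' : i' ≠ j' := by
          intro hc; rw [hc, hSd0 j'] at hne'; exact hne' rfl
        have h2' : 2 ≤ h - 1 := by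
          rcases i' with ⟨iv, hiv⟩; rcases j' with ⟨jv, hjv⟩
          have : iv ≠ jv := fun hc => hij' (by simp [hc])
          omega
        obtain ⟨S₂, hS₂sym, hCS₂⟩ := extract_hyp h2' S hSsym hij' hij1' (hSd0 i') (hSd0 j')
        have h3 : 3 ≤ h := by omega
        have hCW := key _ hCS₂
        rw [lemA_hW3 h h3 S₂] at hCW
        have hCW2 : Cong M ((fromBlocks (1 : Matrix (Fin 3) (Fin 3) F) 0 0 S₂).submatrix
            ⇑(splitEquiv 3 (h-1-2) h (by omega)) ⇑(splitEquiv 3 (h-1-2) h (by omega))) :=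
          hCW.trans (Cong.reindex _ (Cong.blockFst _ cong_T3))
        rw [lemA_eq2 h h3 S₂] at hCW2
        set K := (fromBlocks (1 : Matrix (Fin 1) (Fin 1) F) 0 0 S₂).submatrix
          ⇑(splitEquiv 1 (h-1-2) (h-2) (by omega))
          ⇑(splitEquiv 1 (h-1-2) (h-2) (by omega)) with hK
        have hKsym : Kᵀ = K := by
          rw [hK, transpose_submatrix, fromBlocks_transpose, transpose_one, transpose_zero,
            transpose_zero, hS₂sym]
        have hKdiag : ∃ kk, K kk kk = 1 := by
          refine ⟨⟨0, by omega⟩, ?_⟩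
          rw [hK, submatrix_apply, splitEquiv_mk_lt _ _ (by omega : (0:ℕ) < 1),
            fromBlocks_apply₁₁, one_apply_eq]
        obtain ⟨m, hm, hKm⟩ := IH (h-2) (by omega) K hKsym hKdiag
        refine ⟨m+2, by omega, ?_⟩
        have hfin := hCW2.trans (Cong.reindex _ (Cong.blockSnd _ hKm))
        rwa [lemA_eq3 h m (by omega)] at hfin

lemma rank_Iform (g m : ℕ) (hm : m ≤ g) : (Iform g m).rank = m := by
  have hd : Iform g m = diagonal (fun i : Fin g => if (i:ℕ) < m then (1:F) else 0) := by
    ext i j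
    rw [diagonal_apply]
    by_cases hij : i = j
    · subst hij
      show (if (i:ℕ) = (i:ℕ) ∧ (i:ℕ) < m then (1:F) else 0) = _
      simp
    · show (if (i:ℕ) = (j:ℕ) ∧ (i:ℕ) < m then (1:F) else 0) = _
      rw [if_neg hij, if_neg (fun hc => hij (Fin.val_inj.mp hc.1))]
  rw [hd, rank_diagonal]
  have hiff : ∀ i : Fin g, ((if (i:ℕ) < m then (1:F) else 0) ≠ 0) ↔ (i:ℕ) < m := by
    intro i; split_ifs with h <;> simp [h]
  calc Fintype.card {i : Fin g // (if (i:ℕ) < m then (1:F) else 0) ≠ 0}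
      = Fintype.card {i : Fin g // (i:ℕ) < m} := Fintype.card_congr (Equiv.subtypeEquivRight hiff)
    _ = Fintype.card (Fin m) := Fintype.card_congr
        ⟨fun x => ⟨(x.1 : ℕ), x.2⟩, fun y => ⟨⟨(y:ℕ), by omega⟩, y.isLt⟩,
          fun x => Subtype.ext (Fin.ext rfl), fun y => Fin.ext rfl⟩
    _ = m := Fintype.card_fin m

def flipFun (g m : ℕ) (hm : m ≤ g) (j : Fin g) : Fin g :=
  ⟨if (j:ℕ) < m then m - 1 - (j:ℕ) else (j:ℕ), by have := j.isLt; split_ifs <;> omega⟩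

lemma flip_invol (g m : ℕ) (hm : m ≤ g) : Function.Involutive (flipFun g m hm) := by
  intro j
  have := j.isLt
  ext
  simp only [flipFun]
  split_ifs <;> first | omega | (exfalso; exact ‹False›)

lemma rank_Hform (g m : ℕ) (hm : m ≤ g) : (Hform g m).rank = m := by
  set ρ := (flip_invol g m hm).toPerm with hρ
  have hH : Hform g m = (Iform g m).submatrix ⇑(Equiv.refl (Fin g)) ⇑ρ := by
    ext i j
    rw [submatrix_apply]
    have hval : ((ρ j : Fin g) : ℕ) = if (j:ℕ) < m then m - 1 - (j:ℕ) else (j:ℕ) := rfl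
    show (if (i:ℕ) + (j:ℕ) + 1 = m then (1:F) else 0)
      = (if (i:ℕ) = ((ρ j : Fin g):ℕ) ∧ (i:ℕ) < m then 1 else 0)
    rw [hval]
    have hi := i.isLt
    have hj := j.isLt
    split_ifs <;> first | rfl | omega | (exfalso; exact ‹False›)
  rw [hH, rank_submatrix, rank_Iform g m hm]


end Albert

open Albert in
/-- (Albert) Every symmetric matrix `N` over `ℤ/2ℤ` of rank `λ` is equivalent
mod `GL(g, ℤ/2ℤ)` to `(I_λ 0; 0 0)` if `π(N) = ∏ (1 - n_kk) = 0`, and to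
`(H_λ 0; 0 0)` if `π(N) = 1`, where `H_λ` is the λ×λ antidiagonal matrix. -/
theorem stmt_6 (g : ℕ) (hg : 1 ≤ g) (N : Matrix (Fin g) (Fin g) (ZMod 2))
    (hsym : Nᵀ = N) :
    ∃ A : Matrix (Fin g) (Fin g) (ZMod 2), IsUnit A.det ∧
      ((∏ k : Fin g, (1 - N k k)) = 0 →
        A * N * Aᵀ = Matrix.of fun i j : Fin g =>
          if i = j ∧ (i : ℕ) < N.rank then 1 else 0) ∧
      ((∏ k : Fin g, (1 - N k k)) = 1 →
        A * N * Aᵀ = Matrix.of fun i j : Fin g =>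
          if (i : ℕ) + (j : ℕ) + 1 = N.rank then 1 else 0) := by
  by_cases hd : ∃ k, N k k = 1
  · obtain ⟨m, hm, hC⟩ := lemA g N hsym hd
    obtain ⟨A, hA, hEq⟩ := hC
    have hrank : N.rank = m := by
      have hcr := cong_rank ⟨A, hA, hEq⟩
      rw [rank_Iform g m hm] at hcr
      exact hcr.symm
    refine ⟨A, hA, ?_, ?_⟩
    · intro _
      rw [hEq, hrank]
      ext i j
      show (if (i:ℕ) = (j:ℕ) ∧ (i:ℕ) < m then (1:F) else 0)
        = (if i = j ∧ (i:ℕ) < m then 1 else 0)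
      exact if_congr (and_congr Fin.val_inj Iff.rfl) rfl rfl
    · intro hpi
      exfalso
      obtain ⟨k, hk⟩ := hd
      have hzero : (∏ k : Fin g, (1 - N k k)) = 0 :=
        Finset.prod_eq_zero (Finset.mem_univ k) (by rw [hk]; simp)
      rw [hzero] at hpi
      exact absurd hpi (by decide)
  · have hd0 : ∀ k, N k k = 0 := fun k => F_cases0 _ (fun hc => hd ⟨k, hc⟩)
    obtain ⟨m, hm, hC⟩ := lemB g N hsym hd0
    obtain ⟨A, hA, hEq⟩ := hC
    have hrank : N.rank = m := by
      have hcr := cong_rank ⟨A, hA, hEq⟩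
      rw [rank_Hform g m hm] at hcr
      exact hcr.symm
    refine ⟨A, hA, ?_, ?_⟩
    · intro hpi
      exfalso
      have hone : (∏ k : Fin g, (1 - N k k)) = 1 := by
        simp [hd0]
      rw [hone] at hpi
      exact absurd hpi (by decide)
    · intro _
      rw [hEq, hrank]
      rfl
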